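/- For every k ≥ 0, the following conditions are equivalent: (a) L(ε) stabilizes at k; (b) N_{k+1}^c ≠ {0} and N_{k+l}^c = {0} for all l ≥ 2; (c) R_{k+1} ≠ {0} and R_{k+l} = {0} for all l ≥ 2; (d) N_k ⊋ N_{k+1} and N_{k+1} = N_{k+l} for all l ≥ 2. -/

import Mathlib

namespace Stmt7Aux

variable {𝕂 : Type*} [RCLike 𝕂]
    {B B' : Type*} [AddCommGroup B] [Module 𝕂 B]
    [AddCommGroup B'] [Module 𝕂 B']
    {L : ℕ → B →ₗ[𝕂] B'}
    {Sb S : ℕ → B →ₗ[𝕂] B'}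
    {N Nc : ℕ → Submodule 𝕂 B}
    {R Rc : ℕ → Submodule 𝕂 B'}
    {P : ℕ → B' →ₗ[𝕂] B'}
    {T : ℕ → B' →ₗ[𝕂] B}
    {E M : ℕ → ℕ → B →ₗ[𝕂] B}

/-- sum over range (n+1) equals first term plus Icc 1 n sum -/
lemma sum_range_eq_Icc {γ : Type*} [AddCommMonoid γ] (f : ℕ → γ) (n : ℕ) :
    ∑ i ∈ Finset.range (n + 1), f i = f 0 + ∑ i ∈ Finset.Icc 1 n, f i := by
  have : Finset.range (n+1) = insert 0 (Finset.Icc 1 n) := by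
    ext x; simp [Finset.mem_range, Finset.mem_Icc]; omega
  rw [this, Finset.sum_insert (by simp)]

lemma sum_Icc_shift {γ : Type*} [AddCommMonoid γ] (f : ℕ → γ) (s t : ℕ) :
    ∑ i ∈ Finset.Icc (s+1) (t+1), f i = ∑ i ∈ Finset.Icc s t, f (i + 1) := by
  rw [← Finset.map_add_right_Icc, Finset.sum_map]
  rfl

lemma Nmono (hNdef : ∀ k, N (k + 1) = LinearMap.ker (S (k + 1)) ⊓ N k) :
    ∀ {i j : ℕ}, i ≤ j → N j ≤ N i := by
  intro i j h
  induction j with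
  | zero => simp_all
  | succ n ih =>
    rcases Nat.lt_or_ge i (n+1) with h' | h'
    · exact le_trans (by rw [hNdef n]; exact inf_le_right) (ih (by omega))
    · have : i = n + 1 := by omega
      subst this; exact le_rfl

lemma NcleN (hNcompl : ∀ k, Disjoint (Nc (k + 1)) (N (k + 1)) ∧ Nc (k + 1) ⊔ N (k + 1) = N k)
    (j : ℕ) : Nc (j + 1) ≤ N j := by
  rw [← (hNcompl j).2]; exact le_sup_left

lemma RleRc (hRcompl : ∀ k, Disjoint (R (k + 1)) (Rc (k + 1)) ∧ R (k + 1) ⊔ Rc (k + 1) = Rc k)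
    (j : ℕ) : R (j + 1) ≤ Rc j := by
  rw [← (hRcompl j).2]; exact le_sup_left

lemma Rcmono (hRcompl : ∀ k, Disjoint (R (k + 1)) (Rc (k + 1)) ∧ R (k + 1) ⊔ Rc (k + 1) = Rc k) :
    ∀ {i j : ℕ}, i ≤ j → Rc j ≤ Rc i := by
  intro i j h
  induction j with
  | zero => simp_all
  | succ n ih =>
    rcases Nat.lt_or_ge i (n+1) with h' | h'
    · exact le_trans (by rw [← (hRcompl n).2]; exact le_sup_right) (ih (by omega))
    · have : i = n + 1 := by omega
      subst this; exact le_rfl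

lemma RleRc' (hRcompl : ∀ k, Disjoint (R (k + 1)) (Rc (k + 1)) ∧ R (k + 1) ⊔ Rc (k + 1) = Rc k)
    {i j : ℕ} (h : i < j) (hj : 1 ≤ j) : R j ≤ Rc i := by
  obtain ⟨j', rfl⟩ : ∃ j', j = j' + 1 := ⟨j - 1, by omega⟩
  exact le_trans (RleRc hRcompl j') (Rcmono hRcompl (by omega))

/-- Q_j kills R_i for 1 ≤ i ≤ j -/
lemma Qkill (hRcompl : ∀ k, Disjoint (R (k + 1)) (Rc (k + 1)) ∧ R (k + 1) ⊔ Rc (k + 1) = Rc k)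
    (hPid : ∀ i, 1 ≤ i → ∀ y ∈ R i, P i y = y)
    (hPzeroRc : ∀ i, 1 ≤ i → ∀ y ∈ Rc i, P i y = 0)
    (hPzeroR : ∀ i j, 1 ≤ j → j < i → ∀ y ∈ R j, P i y = 0)
    {j i : ℕ} (hi1 : 1 ≤ i) (hij : i ≤ j) {y : B'} (hy : y ∈ R i) :
    y - ∑ v ∈ Finset.Icc 1 j, P v y = 0 := by
  have : ∑ v ∈ Finset.Icc 1 j, P v y = P i y := by
    apply Finset.sum_eq_single_of_mem i (by simp [Finset.mem_Icc]; omega)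
    intro v hv hvi
    simp only [Finset.mem_Icc] at hv
    rcases Nat.lt_or_ge v i with h' | h'
    · exact hPzeroRc v hv.1 y (RleRc' hRcompl h' hi1 hy)
    · exact hPzeroR v i hi1 (by omega) y hy
  rw [this, hPid i hi1 y hy, sub_self]

lemma QkillSum (hRcompl : ∀ k, Disjoint (R (k + 1)) (Rc (k + 1)) ∧ R (k + 1) ⊔ Rc (k + 1) = Rc k)
    (hPid : ∀ i, 1 ≤ i → ∀ y ∈ R i, P i y = y)
    (hPzeroRc : ∀ i, 1 ≤ i → ∀ y ∈ Rc i, P i y = 0)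
    (hPzeroR : ∀ i j, 1 ≤ j → j < i → ∀ y ∈ R j, P i y = 0)
    {j : ℕ} {y : B'} (hy : y ∈ (Finset.Icc 1 j).sup R) :
    y - ∑ v ∈ Finset.Icc 1 j, P v y = 0 := by
  have : (Finset.Icc 1 j).sup R ≤ LinearMap.ker (LinearMap.id - ∑ v ∈ Finset.Icc 1 j, P v) := by
    apply Finset.sup_le
    intro i hi
    intro y hy
    simp only [Finset.mem_Icc] at hi
    simp only [LinearMap.mem_ker, LinearMap.sub_apply, LinearMap.id_apply, LinearMap.coe_sum,
      Finset.sum_apply]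
    exact Qkill hRcompl hPid hPzeroRc hPzeroR hi.1 hi.2 hy
  have := this hy
  simpa using this

lemma Mdiag (hM11 : M 1 1 = LinearMap.id)
    (hEdiag : ∀ k, E (k + 1) (k + 1) = LinearMap.id)
    (hMrec : ∀ k a, 2 ≤ a → a ≤ k + 1 →
      M a (k + 1) = ∑ b ∈ Finset.Icc (a - 1) k, (M (a - 1) b).comp (E (b + 1) (k + 1))) :
    ∀ m, 1 ≤ m → M m m = LinearMap.id := by
  intro m hm
  induction m with
  | zero => omega
  | succ n ih =>
    rcases Nat.eq_or_lt_of_le hm with h | h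
    · simpa [← h] using hM11
    · have hn : 1 ≤ n := by omega
      rw [hMrec n (n+1) (by omega) le_rfl]
      have : Finset.Icc (n + 1 - 1) n = {n} := by simp
      rw [this, Finset.sum_singleton]
      simp only [Nat.add_sub_cancel]
      rw [ih hn, hEdiag n]
      rfl

end Stmt7Aux

namespace Stmt7AuxB

variable {𝕂 : Type*} [RCLike 𝕂]
    {B B' : Type*} [AddCommGroup B] [Module 𝕂 B]
    [AddCommGroup B'] [Module 𝕂 B']
    {L : ℕ → B →ₗ[𝕂] B'}
    {Sb S : ℕ → B →ₗ[𝕂] B'}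
    {P : ℕ → B' →ₗ[𝕂] B'}
    {T : ℕ → B' →ₗ[𝕂] B}
    {E M : ℕ → ℕ → B →ₗ[𝕂] B}

lemma hSdef' (hSdef : ∀ k, S (k + 1) = Sb (k + 1) - ∑ i ∈ Finset.Icc 1 k, (P i).comp (Sb (k + 1)))
    (k : ℕ) (x : B) :
    S (k+1) x = Sb (k+1) x - ∑ i ∈ Finset.Icc 1 k, P i (Sb (k+1) x) := by
  rw [hSdef k]
  simp

lemma hErec' (hErec : ∀ k i, 1 ≤ i → i ≤ k →
      E i (k + 1) = -((T i).comp (∑ v ∈ Finset.Icc (i + 1) (k + 1), (Sb v).comp (E v (k + 1)))))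
    {k i : ℕ} (h1 : 1 ≤ i) (h2 : i ≤ k) (x : B) :
    E i (k+1) x = -(T i (∑ v ∈ Finset.Icc (i + 1) (k + 1), Sb v (E v (k+1) x))) := by
  rw [hErec k i h1 h2]
  simp

lemma QG
    (hSdef : ∀ k, S (k + 1) = Sb (k + 1) - ∑ i ∈ Finset.Icc 1 k, (P i).comp (Sb (k + 1)))
    (hErec : ∀ k i, 1 ≤ i → i ≤ k →
      E i (k + 1) = -((T i).comp (∑ v ∈ Finset.Icc (i + 1) (k + 1), (Sb v).comp (E v (k + 1)))))
    (hEdiag : ∀ k, E (k + 1) (k + 1) = LinearMap.id)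
    (hST : ∀ i, 1 ≤ i → ∀ y, S i (T i y) = P i y)
    {m : ℕ} {b0 : B} (hb : S (m+1) b0 = 0) :
    ∀ i, 1 ≤ i → i ≤ m →
    (∑ v ∈ Finset.Icc (i+1) (m+1), Sb v (E v (m+1) b0)) -
      ∑ w ∈ Finset.Icc 1 i, P w (∑ v ∈ Finset.Icc (i+1) (m+1), Sb v (E v (m+1) b0)) = 0 := by
  set G : ℕ → B' := fun i => ∑ v ∈ Finset.Icc (i+1) (m+1), Sb v (E v (m+1) b0) with hG
  suffices h : ∀ d i, i + d = m → 1 ≤ i → G i - ∑ w ∈ Finset.Icc 1 i, P w (G i) = 0 by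
    intro i h1 h2
    exact h (m - i) i (by omega) h1
  intro d
  induction d with
  | zero =>
    intro i him h1
    have him' : i = m := by omega
    rw [him']
    have hGm : G m = Sb (m+1) b0 := by
      rw [hG]
      simp only []
      rw [show Finset.Icc (m+1) (m+1) = {m+1} by simp, Finset.sum_singleton, hEdiag m]
      rfl
    rw [hGm, ← hSdef' hSdef m b0, hb]
  | succ d ih =>
    intro i him h1
    have hi1m : i + 1 ≤ m := by omega
    have ihi : G (i+1) - ∑ w ∈ Finset.Icc 1 (i+1), P w (G (i+1)) = 0 := ih (i+1) (by omega) (by omega)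
    have hE : E (i+1) (m+1) b0 = -(T (i+1) (G (i+1))) := hErec' hErec (by omega) hi1m b0
    have hGsplit : G i = Sb (i+1) (E (i+1) (m+1) b0) + G (i+1) := by
      rw [hG]
      simp only []
      rw [show Finset.Icc (i+1) (m+1) = insert (i+1) (Finset.Icc (i+2) (m+1)) by
        ext x; simp [Finset.mem_Icc]; omega]
      rw [Finset.sum_insert (by simp [Finset.mem_Icc])]
    set e : B := E (i+1) (m+1) b0
    have hSe : Sb (i+1) e - ∑ w ∈ Finset.Icc 1 i, P w (Sb (i+1) e) = S (i+1) e :=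
      (hSdef' hSdef i e).symm
    have hSe2 : S (i+1) e = -(P (i+1) (G (i+1))) := by
      rw [show e = -(T (i+1) (G (i+1))) from hE, map_neg, hST (i+1) (by omega)]
    have hsplit2 : ∑ w ∈ Finset.Icc 1 (i+1), P w (G (i+1)) =
        (∑ w ∈ Finset.Icc 1 i, P w (G (i+1))) + P (i+1) (G (i+1)) :=
      Finset.sum_Icc_succ_top (by omega) _
    calc G i - ∑ w ∈ Finset.Icc 1 i, P w (G i)
        = (Sb (i+1) e - ∑ w ∈ Finset.Icc 1 i, P w (Sb (i+1) e))
          + (G (i+1) - ∑ w ∈ Finset.Icc 1 i, P w (G (i+1))) := by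
          rw [hGsplit]
          simp only [map_add, Finset.sum_add_distrib]
          abel
      _ = -(P (i+1) (G (i+1))) +
          ((G (i+1) - ∑ w ∈ Finset.Icc 1 (i+1), P w (G (i+1))) + P (i+1) (G (i+1))) := by
          rw [hSe, hSe2, hsplit2]; abel
      _ = 0 := by rw [ihi]; abel

end Stmt7AuxB

namespace Stmt7AuxC

variable {𝕂 : Type*} [RCLike 𝕂]
    {B B' : Type*} [AddCommGroup B] [Module 𝕂 B]
    [AddCommGroup B'] [Module 𝕂 B']
    {L : ℕ → B →ₗ[𝕂] B'}
    {Sb S : ℕ → B →ₗ[𝕂] B'}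
    {N Nc : ℕ → Submodule 𝕂 B}
    {P : ℕ → B' →ₗ[𝕂] B'}
    {T : ℕ → B' →ₗ[𝕂] B}
    {E M : ℕ → ℕ → B →ₗ[𝕂] B}

lemma genswap (s n : ℕ) (hs : 2 ≤ s) (g : ℕ → ℕ → B') :
    ∑ a ∈ Finset.Icc s (n+1), ∑ b ∈ Finset.Icc (a-1) n, g a b
      = ∑ b ∈ Finset.Icc (s-1) n, ∑ a ∈ Finset.Icc (s-1) b, g (a+1) b := by
  rw [Finset.sum_comm' (s' := fun b => Finset.Icc s (b+1)) (t' := Finset.Icc (s-1) n)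
    (by intro x y; simp [Finset.mem_Icc]; omega)]
  apply Finset.sum_congr rfl
  intro b _
  have h : Finset.Icc s (b+1) = Finset.Icc ((s-1)+1) (b+1) := by congr 1; omega
  rw [h, ← Finset.map_add_right_Icc, Finset.sum_map]
  rfl

lemma hSdef'c (hSdef : ∀ k, S (k + 1) = Sb (k + 1) - ∑ i ∈ Finset.Icc 1 k, (P i).comp (Sb (k + 1)))
    (k : ℕ) (x : B) :
    S (k+1) x = Sb (k+1) x - ∑ i ∈ Finset.Icc 1 k, P i (Sb (k+1) x) := by
  rw [hSdef k]; simp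

lemma hErec'c (hErec : ∀ k i, 1 ≤ i → i ≤ k →
      E i (k + 1) = -((T i).comp (∑ v ∈ Finset.Icc (i + 1) (k + 1), (Sb v).comp (E v (k + 1)))))
    {k i : ℕ} (h1 : 1 ≤ i) (h2 : i ≤ k) (x : B) :
    E i (k+1) x = -(T i (∑ v ∈ Finset.Icc (i + 1) (k + 1), Sb v (E v (k+1) x))) := by
  rw [hErec k i h1 h2]; simp

lemma lemD
    (hSb1 : Sb 1 = L 0)
    (hSbrec : ∀ k, 1 ≤ k → Sb (k + 1) = ∑ i ∈ Finset.Icc 1 k, (L i).comp (M i k))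
    (hSdef : ∀ k, S (k + 1) = Sb (k + 1) - ∑ i ∈ Finset.Icc 1 k, (P i).comp (Sb (k + 1)))
    (hNdef : ∀ k, N (k + 1) = LinearMap.ker (S (k + 1)) ⊓ N k)
    (hNcN : ∀ j, Nc (j + 1) ≤ N j)
    (hTrange : ∀ i, 1 ≤ i → ∀ y, T i y ∈ Nc i)
    (hST : ∀ i, 1 ≤ i → ∀ y, S i (T i y) = P i y)
    (hEdiag : ∀ k, E (k + 1) (k + 1) = LinearMap.id)
    (hErec : ∀ k i, 1 ≤ i → i ≤ k →
      E i (k + 1) = -((T i).comp (∑ v ∈ Finset.Icc (i + 1) (k + 1), (Sb v).comp (E v (k + 1)))))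
    (hM11 : M 1 1 = LinearMap.id)
    (hM1 : ∀ k, 1 ≤ k → M 1 (k + 1) = E 1 (k + 1))
    (hMrec : ∀ k a, 2 ≤ a → a ≤ k + 1 →
      M a (k + 1) = ∑ b ∈ Finset.Icc (a - 1) k, (M (a - 1) b).comp (E (b + 1) (k + 1))) :
    ∀ m, 1 ≤ m → ∀ s, 1 ≤ s → s ≤ m → ∀ b0 ∈ N m,
      ∑ a ∈ Finset.Icc s m, L (a - s) (M a m b0) = 0 := by
  intro m
  induction m using Nat.strong_induction_on with
  | _ m IH =>
  match m with
  | 0 => omega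
  | 1 =>
    intro _ s hs1 hs2 b0 hb0
    have hs : s = 1 := by omega
    subst hs
    rw [show Finset.Icc 1 1 = {1} by rfl, Finset.sum_singleton, hM11]
    have hker : S 1 b0 = 0 := by
      have := (hNdef 0) ▸ hb0
      exact (Submodule.mem_inf.mp this).1
    have : S 1 b0 = L 0 b0 := by
      rw [hSdef'c hSdef 0 b0]
      simp [hSb1]
    simp only [LinearMap.id_apply]
    rw [← this, hker]
  | (n+2) =>
    intro _ s hs1 hs2 b0 hb0
    set n' := n + 1 with hn'
    have hn1 : 1 ≤ n' := by omega
    -- x b := E (b+1) (n'+1) b0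
    set x : ℕ → B := fun b => E (b+1) (n'+1) b0 with hx
    have hxmem : ∀ b, 1 ≤ b → b ≤ n' → x b ∈ N b := by
      intro b h1 h2
      rcases Nat.eq_or_lt_of_le h2 with h | h
      · -- b = n'
        have : x b = b0 := by
          rw [hx]; simp only []
          rw [h, hEdiag n']
          rfl
        rw [this]
        have hmem : b0 ∈ N (b+1) := by
          rw [show b + 1 = n + 2 by omega]; exact hb0
        have := (hNdef b) ▸ hmem
        exact (Submodule.mem_inf.mp this).2
      · -- b+1 ≤ n'
        have hE := hErec'c hErec (i := b+1) (k := n') (by omega) (by omega) b0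
        have hT := hTrange (b+1) (by omega) (∑ v ∈ Finset.Icc (b+2) (n'+1), Sb v (E v (n'+1) b0))
        have : x b ∈ Nc (b+1) := by
          rw [hx]; simp only []
          rw [show b + 1 + 1 = b + 2 by omega] at hE
          rw [hE]
          exact neg_mem hT
        exact hNcN b this
    -- the key rewriting for s ≥ 2
    have key : ∀ s', 2 ≤ s' → s' ≤ n' + 1 → ∀ φ : ℕ → ℕ,
        ∑ a ∈ Finset.Icc s' (n'+1), L (φ a) (M a (n'+1) b0)
          = ∑ b ∈ Finset.Icc (s'-1) n', ∑ a ∈ Finset.Icc (s'-1) b,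
              L (φ (a + 1)) (M a b (x b)) := by
      intro s' hs'1 hs'2 φ
      have step1 : ∀ a ∈ Finset.Icc s' (n'+1),
          L (φ a) (M a (n'+1) b0)
            = ∑ b ∈ Finset.Icc (a-1) n', L (φ a) (M (a-1) b (x b)) := by
        intro a ha
        simp only [Finset.mem_Icc] at ha
        rw [hMrec n' a (by omega) (by omega)]
        simp [hx]
      rw [Finset.sum_congr rfl step1]
      rw [genswap s' n' hs'1 (fun a b => L (φ a) (M (a-1) b (x b)))]
      apply Finset.sum_congr rfl
      intro b _
      apply Finset.sum_congr rfl
      intro a _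
      simp
    rcases Nat.lt_or_ge 1 s with hsge2 | hsle
    · -- case s ≥ 2
      rw [show n + 2 = n' + 1 by omega]
      rw [key s hsge2 (by omega) (fun a => a - s)]
      apply Finset.sum_eq_zero
      intro b hb
      simp only [Finset.mem_Icc] at hb
      have h1b : 1 ≤ b := by omega
      have hIH := IH b (by omega) h1b (s-1) (by omega) (by omega) (x b) (hxmem b h1b hb.2)
      calc ∑ a ∈ Finset.Icc (s-1) b, L (a + 1 - s) (M a b (x b))
          = ∑ a ∈ Finset.Icc (s-1) b, L (a - (s-1)) (M a b (x b)) := by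
            apply Finset.sum_congr rfl
            intro a _
            rw [show a + 1 - s = a - (s - 1) by omega]
        _ = 0 := hIH
    · -- case s = 1
      have hs : s = 1 := by omega
      subst hs
      rw [show n + 2 = n' + 1 by omega]
      have hsplit : Finset.Icc 1 (n'+1) = insert 1 (Finset.Icc 2 (n'+1)) := by
        ext y; simp [Finset.mem_Icc]; omega
      rw [hsplit, Finset.sum_insert (by simp [Finset.mem_Icc])]
      rw [key 2 le_rfl (by omega) (fun a => a - 1)]
      -- inner sums are Sb (b+1) (x b)
      have inner : ∀ b ∈ Finset.Icc (2-1) n', ∑ a ∈ Finset.Icc (2-1) b, L (a + 1 - 1) (M a b (x b))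
          = Sb (b+1) (x b) := by
        intro b hb
        simp only [Finset.mem_Icc] at hb
        rw [hSbrec b (by omega)]
        simp only [LinearMap.coe_sum, Finset.sum_apply, LinearMap.coe_comp,
          Function.comp_apply]
        apply Finset.sum_congr rfl
        intro a _
        rw [show a + 1 - 1 = a by omega]
      rw [Finset.sum_congr rfl inner]
      rw [show (2:ℕ) - 1 = 1 by rfl]
      -- G1
      set G1 : B' := ∑ v ∈ Finset.Icc 2 (n'+1), Sb v (E v (n'+1) b0) with hG1
      have hGeq : ∑ b ∈ Finset.Icc 1 n', Sb (b+1) (x b) = G1 := by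
        rw [hG1, show (2:ℕ) = 1 + 1 by rfl, ← Finset.map_add_right_Icc, Finset.sum_map]
        rfl
      rw [hGeq]
      have hE1 : E 1 (n'+1) b0 = -(T 1 G1) := by
        have := hErec'c hErec (i := 1) (k := n') le_rfl hn1 b0
        rw [this, hG1]
      have hM1' : M 1 (n'+1) b0 = E 1 (n'+1) b0 := by rw [hM1 n' hn1]
      have hS1 : ∀ z, S 1 z = L 0 z := by
        intro z
        rw [hSdef'c hSdef 0 z]
        simp [hSb1]
      have hL0 : L 0 (M 1 (n'+1) b0) = -(P 1 G1) := by
        rw [hM1', hE1, ← hS1, map_neg, hST 1 le_rfl]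
      -- b0 ∈ ker S (n'+1)
      have hker : S (n'+1) b0 = 0 := by
        have := (hNdef n') ▸ (show b0 ∈ N (n' + 1) by rw [hn']; exact_mod_cast hb0)
        exact (Submodule.mem_inf.mp this).1
      -- QG at i = 1
      have hQG := Stmt7AuxB.QG hSdef hErec hEdiag hST hker 1 le_rfl hn1
      rw [show Finset.Icc 1 1 = {1} by rfl, Finset.sum_singleton] at hQG
      rw [show (1:ℕ)+1 = 2 by rfl] at hQG
      rw [hL0]
      rw [← hG1] at hQG
      rw [sub_eq_zero] at hQG
      rw [← hQG]
      exact neg_add_cancel G1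

end Stmt7AuxC

namespace Stmt7AuxD

variable {𝕂 : Type*} [RCLike 𝕂]
    {B B' : Type*} [AddCommGroup B] [Module 𝕂 B]
    [AddCommGroup B'] [Module 𝕂 B']
    {L : ℕ → B →ₗ[𝕂] B'}
    {Sb S : ℕ → B →ₗ[𝕂] B'}
    {N Nc : ℕ → Submodule 𝕂 B}
    {R Rc : ℕ → Submodule 𝕂 B'}
    {P : ℕ → B' →ₗ[𝕂] B'}
    {T : ℕ → B' →ₗ[𝕂] B}
    {E M : ℕ → ℕ → B →ₗ[𝕂] B}

/-- chain property -/
def Chain (L : ℕ → B →ₗ[𝕂] B') (m : ℕ) (b : ℕ → B) : Prop :=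
  ∀ l, l + 1 ≤ m → ∑ i ∈ Finset.range (l + 1), L i (b (l - i)) = 0

lemma chain_mono {m m' : ℕ} (h : m' ≤ m) {b : ℕ → B} (hb : Chain L m b) : Chain L m' b :=
  fun l hl => hb l (le_trans hl h)

/-- the canonical chain built from the M's -/
lemma Mchain
    (hSb1 : Sb 1 = L 0)
    (hSbrec : ∀ k, 1 ≤ k → Sb (k + 1) = ∑ i ∈ Finset.Icc 1 k, (L i).comp (M i k))
    (hSdef : ∀ k, S (k + 1) = Sb (k + 1) - ∑ i ∈ Finset.Icc 1 k, (P i).comp (Sb (k + 1)))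
    (hNdef : ∀ k, N (k + 1) = LinearMap.ker (S (k + 1)) ⊓ N k)
    (hNcN : ∀ j, Nc (j + 1) ≤ N j)
    (hTrange : ∀ i, 1 ≤ i → ∀ y, T i y ∈ Nc i)
    (hST : ∀ i, 1 ≤ i → ∀ y, S i (T i y) = P i y)
    (hEdiag : ∀ k, E (k + 1) (k + 1) = LinearMap.id)
    (hErec : ∀ k i, 1 ≤ i → i ≤ k →
      E i (k + 1) = -((T i).comp (∑ v ∈ Finset.Icc (i + 1) (k + 1), (Sb v).comp (E v (k + 1)))))
    (hM11 : M 1 1 = LinearMap.id)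
    (hM1 : ∀ k, 1 ≤ k → M 1 (k + 1) = E 1 (k + 1))
    (hMrec : ∀ k a, 2 ≤ a → a ≤ k + 1 →
      M a (k + 1) = ∑ b ∈ Finset.Icc (a - 1) k, (M (a - 1) b).comp (E (b + 1) (k + 1)))
    {m : ℕ} (hm : 1 ≤ m) {b0 : B} (hb0 : b0 ∈ N m) :
    Chain L m (fun i => M (m - i) m b0) ∧ M (m - 0) m b0 = b0 := by
  constructor
  · intro l hl
    have hD := Stmt7AuxC.lemD hSb1 hSbrec hSdef hNdef hNcN hTrange hST hEdiag hErec hM11 hM1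
      hMrec m hm (m - l) (by omega) (by omega) b0 hb0
    have hIcc : Finset.Icc (m - l) m = (Finset.Icc 0 l).map (addRightEmbedding (m - l)) := by
      rw [Finset.map_add_right_Icc]
      congr 1 <;> omega
    rw [← hD, hIcc, Finset.sum_map]
    rw [show Finset.range (l + 1) = Finset.Icc 0 l by ext y; simp]
    apply Finset.sum_congr rfl
    intro i hi
    simp only [Finset.mem_Icc] at hi
    simp only [addRightEmbedding_apply]
    rw [show i + (m - l) - (m - l) = i by omega, show m - (l - i) = i + (m - l) by omega]
  · rw [show m - 0 = m by omega,
      Stmt7Aux.Mdiag hM11 hEdiag hMrec m hm]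
    rfl

lemma ABC
    (hN0 : N 0 = ⊤)
    (hSb1 : Sb 1 = L 0)
    (hSbrec : ∀ k, 1 ≤ k → Sb (k + 1) = ∑ i ∈ Finset.Icc 1 k, (L i).comp (M i k))
    (hSdef : ∀ k, S (k + 1) = Sb (k + 1) - ∑ i ∈ Finset.Icc 1 k, (P i).comp (Sb (k + 1)))
    (hNdef : ∀ k, N (k + 1) = LinearMap.ker (S (k + 1)) ⊓ N k)
    (hRdef : ∀ k, R (k + 1) = Submodule.map (S (k + 1)) (N k))
    (hNcN : ∀ j, Nc (j + 1) ≤ N j)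
    (hRcompl : ∀ k, Disjoint (R (k + 1)) (Rc (k + 1)) ∧ R (k + 1) ⊔ Rc (k + 1) = Rc k)
    (hPrange : ∀ i, 1 ≤ i → LinearMap.range (P i) ≤ R i)
    (hPid : ∀ i, 1 ≤ i → ∀ y ∈ R i, P i y = y)
    (hPzeroRc : ∀ i, 1 ≤ i → ∀ y ∈ Rc i, P i y = 0)
    (hPzeroR : ∀ i j, 1 ≤ j → j < i → ∀ y ∈ R j, P i y = 0)
    (hTrange : ∀ i, 1 ≤ i → ∀ y, T i y ∈ Nc i)
    (hST : ∀ i, 1 ≤ i → ∀ y, S i (T i y) = P i y)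
    (hEdiag : ∀ k, E (k + 1) (k + 1) = LinearMap.id)
    (hErec : ∀ k i, 1 ≤ i → i ≤ k →
      E i (k + 1) = -((T i).comp (∑ v ∈ Finset.Icc (i + 1) (k + 1), (Sb v).comp (E v (k + 1)))))
    (hM11 : M 1 1 = LinearMap.id)
    (hM1 : ∀ k, 1 ≤ k → M 1 (k + 1) = E 1 (k + 1))
    (hMrec : ∀ k a, 2 ≤ a → a ≤ k + 1 →
      M a (k + 1) = ∑ b ∈ Finset.Icc (a - 1) k, (M (a - 1) b).comp (E (b + 1) (k + 1))) :
    ∀ m : ℕ,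
      (∀ b : ℕ → B, Chain L m b → b 0 ∈ N m) ∧
      (∀ d : ℕ → B, d 0 = 0 → Chain L m d →
        (∑ i ∈ Finset.Icc 1 m, L i (d (m - i))) ∈ (Finset.Icc 1 m).sup R) ∧
      (∀ e : ℕ → B, Chain L m e →
        (∑ i ∈ Finset.Icc 1 m, L i (e (m - i))) ∈ (Finset.Icc 1 (m+1)).sup R) := by
  have hS1 : ∀ z, S 1 z = L 0 z := by
    intro z
    rw [Stmt7AuxC.hSdef'c hSdef 0 z]
    simp [hSb1]
  intro m
  induction m using Nat.strong_induction_on with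
  | _ m IH =>
  match m with
  | 0 =>
    refine ⟨fun b _ => by rw [hN0]; trivial, fun d _ _ => by simp, fun e _ => by simp⟩
  | (j+1) =>
    -- part A
    have hA : ∀ b : ℕ → B, Chain L (j+1) b → b 0 ∈ N (j+1) := by
      intro b hb
      have hNj : b 0 ∈ N j := (IH j (by omega)).1 b (chain_mono (by omega) hb)
      have hker : S (j+1) (b 0) = 0 := by
        rcases Nat.eq_zero_or_pos j with hj | hj
        · subst hj
          have h0 := hb 0 (by omega)
          rw [hS1]
          simpa using h0
        · -- j ≥ 1
          obtain ⟨hc, hc0⟩ := Mchain hSb1 hSbrec hSdef hNdef hNcN hTrange hST hEdiag hErec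
            hM11 hM1 hMrec hj hNj
          set c : ℕ → B := fun i => M (j - i) j (b 0) with hcdef
          set d : ℕ → B := fun i => b i - c i with hddef
          have hd0 : d 0 = 0 := by
            rw [hddef]; simp only [hcdef]
            rw [hc0]; simp
          have hchd : Chain L j d := by
            intro l hl
            have h1 := (chain_mono (Nat.le_succ j) hb) l hl
            have h2 := hc l hl
            rw [hddef]
            simp only [map_sub, Finset.sum_sub_distrib]
            rw [h1]
            simp only [hcdef] at h2 ⊢
            rw [h2, sub_zero]
          have hw := (IH j (by omega)).2.1 d hd0 hchd
          set w : B' := ∑ i ∈ Finset.Icc 1 j, L i (d (j - i)) with hwdef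
          -- level j condition
          have hlevel := hb j (by omega)
          rw [Stmt7Aux.sum_range_eq_Icc (fun i => L i (b (j - i))) j] at hlevel
          have hsplitbc : ∑ i ∈ Finset.Icc 1 j, L i (b (j - i))
              = Sb (j+1) (b 0) + w := by
            have : ∀ i ∈ Finset.Icc 1 j, L i (b (j - i)) = L i (c (j - i)) + L i (d (j - i)) := by
              intro i _
              rw [hddef]
              simp [map_sub]
            rw [Finset.sum_congr rfl this, Finset.sum_add_distrib, hwdef]
            congr 1
            rw [hSbrec j hj]
            simp only [LinearMap.coe_sum, Finset.sum_apply, LinearMap.coe_comp,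
              Function.comp_apply]
            apply Finset.sum_congr rfl
            intro i hi
            simp only [Finset.mem_Icc] at hi
            rw [hcdef]
            simp only [hcdef]
            rw [show j - (j - i) = i by omega]
          rw [hsplitbc, Nat.sub_zero] at hlevel
          -- apply Q
          set Q : B' →ₗ[𝕂] B' := LinearMap.id - ∑ v ∈ Finset.Icc 1 j, P v with hQdef
          have hQapp : ∀ y : B', Q y = y - ∑ v ∈ Finset.Icc 1 j, P v y := by
            intro y; rw [hQdef]; simp
          have hQL0 : Q (L 0 (b j)) = 0 := by
            rw [hQapp]
            apply Stmt7Aux.Qkill hRcompl hPid hPzeroRc hPzeroR le_rfl hj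
            rw [hRdef 0]
            exact ⟨b j, by rw [hN0]; trivial, by norm_num [hS1]⟩
          have hQw : Q w = 0 := by
            rw [hQapp]
            exact Stmt7Aux.QkillSum hRcompl hPid hPzeroRc hPzeroR hw
          have hQS : Q (Sb (j+1) (b 0)) = S (j+1) (b 0) := by
            rw [hQapp]
            exact (Stmt7AuxC.hSdef'c hSdef j (b 0)).symm
          have := congrArg Q hlevel
          rw [map_add, map_add, hQL0, hQw, hQS, map_zero, zero_add, add_zero] at this
          exact this
      rw [hNdef j]
      exact Submodule.mem_inf.mpr ⟨hker, hNj⟩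
    have hB : ∀ d : ℕ → B, d 0 = 0 → Chain L (j+1) d →
        (∑ i ∈ Finset.Icc 1 (j+1), L i (d (j + 1 - i))) ∈ (Finset.Icc 1 (j+1)).sup R := by
      intro d hd0 hd
      set e : ℕ → B := fun i => d (i + 1) with hedef
      have hche : Chain L j e := by
        intro l hl
        have h := hd (l+1) (by omega)
        rw [Finset.sum_range_succ] at h
        rw [show l + 1 - (l+1) = 0 by omega, hd0, map_zero, add_zero] at h
        rw [← h]
        apply Finset.sum_congr rfl
        intro i hi
        simp only [Finset.mem_range] at hi
        rw [hedef]
        simp only []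
        rw [show l - i + 1 = l + 1 - i by omega]
      have hmem := (IH j (by omega)).2.2 e hche
      have heq : ∑ i ∈ Finset.Icc 1 (j+1), L i (d (j + 1 - i))
          = ∑ i ∈ Finset.Icc 1 j, L i (e (j - i)) := by
        rw [Finset.sum_Icc_succ_top (by omega)]
        rw [show j + 1 - (j+1) = 0 by omega, hd0, map_zero, add_zero]
        apply Finset.sum_congr rfl
        intro i hi
        simp only [Finset.mem_Icc] at hi
        rw [hedef]
        simp only []
        rw [show j - i + 1 = j + 1 - i by omega]
      rw [heq]
      exact hmem
    have hC : ∀ e : ℕ → B, Chain L (j+1) e →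
        (∑ i ∈ Finset.Icc 1 (j+1), L i (e (j + 1 - i))) ∈ (Finset.Icc 1 (j+2)).sup R := by
      intro e he
      have he0 : e 0 ∈ N (j+1) := hA e he
      obtain ⟨hc, hc0⟩ := Mchain hSb1 hSbrec hSdef hNdef hNcN hTrange hST hEdiag hErec
        hM11 hM1 hMrec (Nat.succ_le_succ (Nat.zero_le j)) he0
      set c : ℕ → B := fun i => M (j + 1 - i) (j+1) (e 0) with hcdef
      set d : ℕ → B := fun i => e i - c i with hddef
      have hd0 : d 0 = 0 := by
        rw [hddef]; simp only [hcdef]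
        rw [hc0]; simp
      have hchd : Chain L (j+1) d := by
        intro l hl
        have h1 := he l hl
        have h2 := hc l hl
        rw [hddef]
        simp only [map_sub, Finset.sum_sub_distrib]
        rw [h1]
        simp only [hcdef] at h2 ⊢
        rw [h2, sub_zero]
      have hwB := hB d hd0 hchd
      set w : B' := ∑ i ∈ Finset.Icc 1 (j+1), L i (d (j + 1 - i)) with hwdef
      have heq : ∑ i ∈ Finset.Icc 1 (j+1), L i (e (j + 1 - i))
          = Sb (j+2) (e 0) + w := by
        have hsplit : ∀ i ∈ Finset.Icc 1 (j+1),
            L i (e (j + 1 - i)) = L i (c (j + 1 - i)) + L i (d (j + 1 - i)) := by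
          intro i _
          rw [hddef]
          simp [map_sub]
        rw [Finset.sum_congr rfl hsplit, Finset.sum_add_distrib, hwdef]
        congr 1
        rw [show j + 2 = (j + 1) + 1 by omega, hSbrec (j+1) (by omega)]
        simp only [LinearMap.coe_sum, Finset.sum_apply, LinearMap.coe_comp,
          Function.comp_apply]
        apply Finset.sum_congr rfl
        intro i hi
        simp only [Finset.mem_Icc] at hi
        rw [hcdef]
        simp only [hcdef]
        rw [show j + 1 - (j + 1 - i) = i by omega]
      have hSbsplit : Sb (j+2) (e 0)
          = S (j+2) (e 0) + ∑ v ∈ Finset.Icc 1 (j+1), P v (Sb (j+2) (e 0)) := by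
        have h := Stmt7AuxC.hSdef'c hSdef (j+1) (e 0)
        rw [show j + 1 + 1 = j + 2 by omega] at h
        rw [h]
        abel
      have mem1 : S (j+2) (e 0) ∈ (Finset.Icc 1 (j+2)).sup R := by
        apply Finset.le_sup (f := R) (by simp [Finset.mem_Icc] : (j+2) ∈ Finset.Icc 1 (j+2))
        rw [show j + 2 = (j+1)+1 by omega, hRdef (j+1)]
        exact ⟨e 0, he0, rfl⟩
      have mem2 : (∑ v ∈ Finset.Icc 1 (j+1), P v (Sb (j+2) (e 0)))
          ∈ (Finset.Icc 1 (j+2)).sup R := by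
        apply Submodule.sum_mem
        intro v hv
        simp only [Finset.mem_Icc] at hv
        apply Finset.le_sup (f := R) (by simp [Finset.mem_Icc]; omega : v ∈ Finset.Icc 1 (j+2))
        exact hPrange v hv.1 ⟨Sb (j+2) (e 0), rfl⟩
      have hsub : (Finset.Icc 1 (j+1)).sup R ≤ (Finset.Icc 1 (j+2)).sup R :=
        Finset.sup_mono (Finset.Icc_subset_Icc_right (by omega))
      have mem3 : w ∈ (Finset.Icc 1 (j+2)).sup R := hsub hwB
      rw [heq, hSbsplit]
      exact Submodule.add_mem _ (Submodule.add_mem _ mem1 mem2) mem3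
    exact ⟨hA, hB, fun e he => by
      have := hC e he
      rw [show j + 1 + 1 = j + 2 by omega]
      exact this⟩

end Stmt7AuxD

namespace Stmt7AuxE

variable {𝕂 : Type*} [RCLike 𝕂]
    {B B' : Type*} [AddCommGroup B] [Module 𝕂 B]
    [AddCommGroup B'] [Module 𝕂 B']
    {L : ℕ → B →ₗ[𝕂] B'}
    {Sb S : ℕ → B →ₗ[𝕂] B'}
    {N Nc : ℕ → Submodule 𝕂 B}
    {R Rc : ℕ → Submodule 𝕂 B'}
    {P : ℕ → B' →ₗ[𝕂] B'}
    {T : ℕ → B' →ₗ[𝕂] B}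
    {E M : ℕ → ℕ → B →ₗ[𝕂] B}

lemma memN_iff_chain
    (hN0 : N 0 = ⊤)
    (hSb1 : Sb 1 = L 0)
    (hSbrec : ∀ k, 1 ≤ k → Sb (k + 1) = ∑ i ∈ Finset.Icc 1 k, (L i).comp (M i k))
    (hSdef : ∀ k, S (k + 1) = Sb (k + 1) - ∑ i ∈ Finset.Icc 1 k, (P i).comp (Sb (k + 1)))
    (hNdef : ∀ k, N (k + 1) = LinearMap.ker (S (k + 1)) ⊓ N k)
    (hRdef : ∀ k, R (k + 1) = Submodule.map (S (k + 1)) (N k))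
    (hNcN : ∀ j, Nc (j + 1) ≤ N j)
    (hRcompl : ∀ k, Disjoint (R (k + 1)) (Rc (k + 1)) ∧ R (k + 1) ⊔ Rc (k + 1) = Rc k)
    (hPrange : ∀ i, 1 ≤ i → LinearMap.range (P i) ≤ R i)
    (hPid : ∀ i, 1 ≤ i → ∀ y ∈ R i, P i y = y)
    (hPzeroRc : ∀ i, 1 ≤ i → ∀ y ∈ Rc i, P i y = 0)
    (hPzeroR : ∀ i j, 1 ≤ j → j < i → ∀ y ∈ R j, P i y = 0)
    (hTrange : ∀ i, 1 ≤ i → ∀ y, T i y ∈ Nc i)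
    (hST : ∀ i, 1 ≤ i → ∀ y, S i (T i y) = P i y)
    (hEdiag : ∀ k, E (k + 1) (k + 1) = LinearMap.id)
    (hErec : ∀ k i, 1 ≤ i → i ≤ k →
      E i (k + 1) = -((T i).comp (∑ v ∈ Finset.Icc (i + 1) (k + 1), (Sb v).comp (E v (k + 1)))))
    (hM11 : M 1 1 = LinearMap.id)
    (hM1 : ∀ k, 1 ≤ k → M 1 (k + 1) = E 1 (k + 1))
    (hMrec : ∀ k a, 2 ≤ a → a ≤ k + 1 →
      M a (k + 1) = ∑ b ∈ Finset.Icc (a - 1) k, (M (a - 1) b).comp (E (b + 1) (k + 1)))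
    (m : ℕ) (b0 : B) :
    b0 ∈ N m ↔ ∃ b : ℕ → B, b 0 = b0 ∧
      ∀ l, l + 1 ≤ m → ∑ i ∈ Finset.range (l + 1), L i (b (l - i)) = 0 := by
  constructor
  · intro hmem
    match m with
    | 0 => exact ⟨fun _ => b0, rfl, fun l hl => absurd hl (by omega)⟩
    | (m'+1) =>
      obtain ⟨hc, hc0⟩ := Stmt7AuxD.Mchain hSb1 hSbrec hSdef hNdef hNcN hTrange hST hEdiag
        hErec hM11 hM1 hMrec (Nat.succ_le_succ (Nat.zero_le m')) hmem
      exact ⟨fun i => M (m' + 1 - i) (m'+1) b0, hc0, hc⟩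
  · rintro ⟨b, hb0, hb⟩
    have := (Stmt7AuxD.ABC hN0 hSb1 hSbrec hSdef hNdef hRdef hNcN hRcompl hPrange hPid
      hPzeroRc hPzeroR hTrange hST hEdiag hErec hM11 hM1 hMrec m).1 b hb
    rwa [hb0] at this

lemma tail_iff (N : ℕ → Submodule 𝕂 B) (k : ℕ) (Q : ℕ → Prop)
    (hQ : ∀ j, 1 ≤ j → (Q (j + 1) ↔ N (j + 1) = N j)) :
    (∀ l, 2 ≤ l → Q (k + l)) ↔ (∀ l, 2 ≤ l → N (k + 1) = N (k + l)) := by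
  constructor
  · intro h l hl
    induction l, hl using Nat.le_induction with
    | base => exact ((hQ (k+1) (by omega)).1 (h 2 le_rfl)).symm
    | succ l hl ih =>
      have h1 : N (k + l + 1) = N (k + l) := (hQ (k + l) (by omega)).1 (h (l+1) (by omega))
      rw [show k + (l + 1) = k + l + 1 by omega, h1]
      exact ih
  · intro h l hl
    have h1 : N (k + 1) = N (k + l) := h l hl
    have h2 : N (k + 1) = N (k + (l - 1)) := by
      rcases Nat.eq_or_lt_of_le hl with h' | h'
      · rw [show k + (l - 1) = k + 1 by omega]
      · exact h (l - 1) (by omega)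
    have hkl : k + l = (k + (l - 1)) + 1 := by omega
    rw [hkl]
    apply (hQ (k + (l - 1)) (by omega)).2
    rw [← hkl, ← h1, h2]

lemma NcBot (hNcompl : ∀ k, Disjoint (Nc (k + 1)) (N (k + 1)) ∧ Nc (k + 1) ⊔ N (k + 1) = N k)
    (j : ℕ) : Nc (j + 1) = ⊥ ↔ N (j + 1) = N j := by
  constructor
  · intro h
    have h2 := (hNcompl j).2
    rwa [h, bot_sup_eq] at h2
  · intro h
    apply (hNcompl j).1.eq_bot_of_le
    calc Nc (j+1) ≤ N j := Stmt7Aux.NcleN hNcompl j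
      _ = N (j+1) := h.symm

lemma RBot (hNdef : ∀ k, N (k + 1) = LinearMap.ker (S (k + 1)) ⊓ N k)
    (hRdef : ∀ k, R (k + 1) = Submodule.map (S (k + 1)) (N k))
    (j : ℕ) : R (j + 1) = ⊥ ↔ N (j + 1) = N j := by
  have hmb : Submodule.map (S (j+1)) (N j) = ⊥ ↔ N j ≤ LinearMap.ker (S (j+1)) := by
    constructor
    · intro h x hx
      have : S (j+1) x ∈ Submodule.map (S (j+1)) (N j) := ⟨x, hx, rfl⟩
      rw [h] at this
      simpa using this
    · intro h
      rw [eq_bot_iff]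
      rintro y ⟨x, hx, rfl⟩
      simpa using h hx
  rw [hRdef j, hmb]
  constructor
  · intro h
    rw [hNdef j, inf_eq_right.mpr h]
  · intro h
    have h2 : LinearMap.ker (S (j+1)) ⊓ N j = N j := (hNdef j).symm.trans h
    calc N j = LinearMap.ker (S (j+1)) ⊓ N j := h2.symm
      _ ≤ LinearMap.ker (S (j+1)) := inf_le_left

end Stmt7AuxE

theorem stmt_7
    {𝕂 : Type*} [RCLike 𝕂]
    {B B' : Type*} [AddCommGroup B] [Module 𝕂 B]
    [AddCommGroup B'] [Module 𝕂 B']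
    (L : ℕ → B →ₗ[𝕂] B')
    (Sb S : ℕ → B →ₗ[𝕂] B')
    (N Nc : ℕ → Submodule 𝕂 B)
    (R Rc : ℕ → Submodule 𝕂 B')
    (P : ℕ → B' →ₗ[𝕂] B')
    (T : ℕ → B' →ₗ[𝕂] B)
    (E M : ℕ → ℕ → B →ₗ[𝕂] B)
    (hL : ∃ i, L i ≠ 0)
    (hN0 : N 0 = ⊤) (hRc0 : Rc 0 = ⊤)
    (hSb1 : Sb 1 = L 0)
    (hSbrec : ∀ k, 1 ≤ k → Sb (k + 1) = ∑ i ∈ Finset.Icc 1 k, (L i).comp (M i k))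
    (hSdef : ∀ k, S (k + 1) = Sb (k + 1) - ∑ i ∈ Finset.Icc 1 k, (P i).comp (Sb (k + 1)))
    (hNdef : ∀ k, N (k + 1) = LinearMap.ker (S (k + 1)) ⊓ N k)
    (hRdef : ∀ k, R (k + 1) = Submodule.map (S (k + 1)) (N k))
    (hNcompl : ∀ k, Disjoint (Nc (k + 1)) (N (k + 1)) ∧ Nc (k + 1) ⊔ N (k + 1) = N k)
    (hRcompl : ∀ k, Disjoint (R (k + 1)) (Rc (k + 1)) ∧ R (k + 1) ⊔ Rc (k + 1) = Rc k)
    (hPrange : ∀ i, 1 ≤ i → LinearMap.range (P i) ≤ R i)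
    (hPid : ∀ i, 1 ≤ i → ∀ y ∈ R i, P i y = y)
    (hPzeroRc : ∀ i, 1 ≤ i → ∀ y ∈ Rc i, P i y = 0)
    (hPzeroR : ∀ i j, 1 ≤ j → j < i → ∀ y ∈ R j, P i y = 0)
    (hTrange : ∀ i, 1 ≤ i → ∀ y, T i y ∈ Nc i)
    (hTS : ∀ i, 1 ≤ i → ∀ x ∈ Nc i, T i (S i x) = x)
    (hST : ∀ i, 1 ≤ i → ∀ y, S i (T i y) = P i y)
    (hE11 : E 1 1 = LinearMap.id)
    (hEdiag : ∀ k, E (k + 1) (k + 1) = LinearMap.id)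
    (hErec : ∀ k i, 1 ≤ i → i ≤ k →
      E i (k + 1) = -((T i).comp (∑ v ∈ Finset.Icc (i + 1) (k + 1), (Sb v).comp (E v (k + 1)))))
    (hM11 : M 1 1 = LinearMap.id)
    (hM1 : ∀ k, 1 ≤ k → M 1 (k + 1) = E 1 (k + 1))
    (hMrec : ∀ k a, 2 ≤ a → a ≤ k + 1 →
      M a (k + 1) = ∑ b ∈ Finset.Icc (a - 1) k, (M (a - 1) b).comp (E (b + 1) (k + 1)))
    (rank : B → ℕ∞)
    (hrank : ∀ b0 : B, rank b0 = sSup {x : ℕ∞ | ∃ m : ℕ, 1 ≤ m ∧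
      (∃ b : ℕ → B, b 0 = b0 ∧
        ∀ l, l + 1 ≤ m → ∑ i ∈ Finset.range (l + 1), L i (b (l - i)) = 0) ∧ x = (m : ℕ∞)})
    (k : ℕ) :
    (((∀ b0 : B, rank b0 ≤ (k : ℕ∞) ∨ rank b0 = ⊤) ∧ ∃ b0 : B, rank b0 = (k : ℕ∞)) ↔
      (Nc (k + 1) ≠ ⊥ ∧ ∀ l, 2 ≤ l → Nc (k + l) = ⊥)) ∧
    (((∀ b0 : B, rank b0 ≤ (k : ℕ∞) ∨ rank b0 = ⊤) ∧ ∃ b0 : B, rank b0 = (k : ℕ∞)) ↔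
      (R (k + 1) ≠ ⊥ ∧ ∀ l, 2 ≤ l → R (k + l) = ⊥)) ∧
    (((∀ b0 : B, rank b0 ≤ (k : ℕ∞) ∨ rank b0 = ⊤) ∧ ∃ b0 : B, rank b0 = (k : ℕ∞)) ↔
      (N (k + 1) < N k ∧ ∀ l, 2 ≤ l → N (k + 1) = N (k + l))) := by
  classical
  have hNcN : ∀ j, Nc (j + 1) ≤ N j := Stmt7Aux.NcleN hNcompl
  have hanti : ∀ {i j : ℕ}, i ≤ j → N j ≤ N i := fun h => Stmt7Aux.Nmono hNdef h
  have hJ : ∀ (m : ℕ) (b0 : B), b0 ∈ N m ↔ ∃ b : ℕ → B, b 0 = b0 ∧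
      ∀ l, l + 1 ≤ m → ∑ i ∈ Finset.range (l + 1), L i (b (l - i)) = 0 :=
    Stmt7AuxE.memN_iff_chain hN0 hSb1 hSbrec hSdef hNdef hRdef hNcN hRcompl hPrange hPid
      hPzeroRc hPzeroR hTrange hST hEdiag hErec hM11 hM1 hMrec
  -- rank characterisations
  have hrank_le : ∀ (b0 : B) (j : ℕ), rank b0 ≤ (j : ℕ∞) ↔ b0 ∉ N (j + 1) := by
    intro b0 j
    constructor
    · intro hle hmem
      obtain ⟨b, hb0, hb⟩ := (hJ (j+1) b0).1 hmem
      have hx : ((j + 1 : ℕ) : ℕ∞) ≤ rank b0 := by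
        rw [hrank b0]
        exact le_sSup ⟨j + 1, by omega, ⟨b, hb0, hb⟩, rfl⟩
      have := le_trans hx hle
      have : j + 1 ≤ j := by exact_mod_cast this
      omega
    · intro hnm
      rw [hrank b0]
      apply sSup_le
      rintro x ⟨m, hm1, ⟨b, hb0, hb⟩, rfl⟩
      have hmle : m ≤ j := by
        by_contra hcon
        push_neg at hcon
        exact hnm ((hJ (j+1) b0).2 ⟨b, hb0, fun l hl => hb l (by omega)⟩)
      exact_mod_cast hmle
  have hrank_ge : ∀ (b0 : B) (m : ℕ), 1 ≤ m → b0 ∈ N m → (m : ℕ∞) ≤ rank b0 := by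
    intro b0 m hm hmem
    rw [hrank b0]
    exact le_sSup ⟨m, hm, (hJ m b0).1 hmem, rfl⟩
  have hrank_top : ∀ b0 : B, (∀ m, b0 ∈ N m) → rank b0 = ⊤ := by
    intro b0 hmem
    by_contra hne
    lift rank b0 to ℕ using hne with n hn
    have := hrank_ge b0 (n + 1) (by omega) (hmem (n + 1))
    rw [← hn] at this
    have : n + 1 ≤ n := by exact_mod_cast this
    omega
  have htop_mem : ∀ b0 : B, rank b0 = ⊤ → ∀ m, b0 ∈ N m := by
    intro b0 h m
    by_contra hn
    match m with
    | 0 => exact hn (by rw [hN0]; trivial)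
    | (m' + 1) =>
      have := (hrank_le b0 m').2 hn
      rw [h] at this
      simp at this
  have hrank_eqk : ∀ b0 : B, rank b0 = (k : ℕ∞) ↔ (b0 ∈ N k ∧ b0 ∉ N (k + 1)) := by
    intro b0
    constructor
    · intro h
      refine ⟨?_, (hrank_le b0 k).1 (le_of_eq h)⟩
      rcases Nat.eq_zero_or_pos k with hk | hk
      · subst hk; rw [hN0]; trivial
      · by_contra hn
        have h2 := (hrank_le b0 (k - 1)).2 (by rw [show k - 1 + 1 = k by omega]; exact hn)
        rw [h] at h2
        have : k ≤ k - 1 := by exact_mod_cast h2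
        omega
    · rintro ⟨h1, h2⟩
      have hle := (hrank_le b0 k).2 h2
      rcases Nat.eq_zero_or_pos k with hk | hk
      · subst hk
        exact le_antisymm hle (by simp)
      · exact le_antisymm hle (hrank_ge b0 k hk h1)
  -- equivalence of (a) with the N-condition (d)
  have had : ((∀ b0 : B, rank b0 ≤ (k : ℕ∞) ∨ rank b0 = ⊤) ∧ ∃ b0 : B, rank b0 = (k : ℕ∞)) ↔
      (N (k + 1) < N k ∧ ∀ l, 2 ≤ l → N (k + 1) = N (k + l)) := by
    constructor
    · rintro ⟨hall, b0, hb0⟩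
      obtain ⟨hmem, hnmem⟩ := (hrank_eqk b0).1 hb0
      have hdich : ∀ x : B, x ∈ N (k + 1) → ∀ m, x ∈ N m := by
        intro x hx m
        rcases hall x with h' | h'
        · exact absurd hx ((hrank_le x k).1 h')
        · exact htop_mem x h' m
      refine ⟨lt_of_le_of_ne (hanti (by omega)) (fun he => hnmem (he ▸ hmem)), ?_⟩
      intro l hl
      exact le_antisymm (fun x hx => hdich x hx (k + l)) (hanti (by omega))
    · rintro ⟨hlt, htail⟩
      have hdich : ∀ x : B, x ∈ N (k + 1) → ∀ m, x ∈ N m := by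
        intro x hx m
        rcases le_or_gt m (k + 1) with h | h
        · exact hanti h hx
        · have he := htail (m - k) (by omega)
          rw [show k + (m - k) = m by omega] at he
          exact he ▸ hx
      constructor
      · intro b0
        by_cases hb0 : b0 ∈ N (k + 1)
        · exact Or.inr (hrank_top b0 (hdich b0 hb0))
        · exact Or.inl ((hrank_le b0 k).2 hb0)
      · obtain ⟨hle, x, hxk, hxk1⟩ := SetLike.lt_iff_le_and_exists.mp hlt
        exact ⟨x, (hrank_eqk x).2 ⟨hxk, hxk1⟩⟩
  -- (b) ↔ (d)
  have hbd : (Nc (k + 1) ≠ ⊥ ∧ ∀ l, 2 ≤ l → Nc (k + l) = ⊥) ↔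
      (N (k + 1) < N k ∧ ∀ l, 2 ≤ l → N (k + 1) = N (k + l)) := by
    apply and_congr
    · exact (not_congr (Stmt7AuxE.NcBot hNcompl k)).trans
        ((hanti (by omega)).lt_iff_ne).symm
    · exact Stmt7AuxE.tail_iff N k (fun j => Nc j = ⊥)
        (fun j _ => Stmt7AuxE.NcBot hNcompl j)
  -- (c) ↔ (d)
  have hcd : (R (k + 1) ≠ ⊥ ∧ ∀ l, 2 ≤ l → R (k + l) = ⊥) ↔
      (N (k + 1) < N k ∧ ∀ l, 2 ≤ l → N (k + 1) = N (k + l)) := by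
    apply and_congr
    · exact (not_congr (Stmt7AuxE.RBot hNdef hRdef k)).trans
        ((hanti (by omega)).lt_iff_ne).symm
    · exact Stmt7AuxE.tail_iff N k (fun j => R j = ⊥)
        (fun j _ => Stmt7AuxE.RBot hNdef hRdef j)
  exact ⟨had.trans hbd.symm, had.trans hcd.symm, had⟩
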